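/- Let P be a probability distribution that is a mixture P = (1-δ)Q + δR of distributions Q and R, with 0 ≤ δ < 1, and let f be a real-valued function with E_{X∼P}[f(X)²] < ∞. Then |E_{X∼P}[f(X)] - E_{X∼Q}[f(X)]| ≤ 2·√(δ·E_{X∼P}[f(X)²])/(1-δ). -/

import Mathlib

open MeasureTheory

lemma cs_prob {α : Type*} [MeasurableSpace α] (μ : Measure α) [IsProbabilityMeasure μ]
    (f : α → ℝ) (hf : MemLp f 2 μ) :
    |∫ x, f x ∂μ| ≤ Real.sqrt (∫ x, f x ^ 2 ∂μ) := by
  have h := ProbabilityTheory.variance_nonneg f μ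
  rw [ProbabilityTheory.variance_eq_sub hf] at h
  have h2 : (∫ x, f x ∂μ) ^ 2 ≤ ∫ x, f x ^ 2 ∂μ := by
    simpa [Pi.pow_apply] using h
  calc |∫ x, f x ∂μ| = Real.sqrt ((∫ x, f x ∂μ) ^ 2) := (Real.sqrt_sq_eq_abs _).symm
    _ ≤ _ := Real.sqrt_le_sqrt h2

/-- If `P = (1-δ)Q + δR` is a mixture of probability measures, `0 ≤ δ < 1`, and
`f` is square-integrable w.r.t. `P`, then
`|E_P[f] - E_Q[f]| ≤ 2·√(δ·E_P[f²])/(1-δ)`. -/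
theorem mixture_mean_shift_bound {α : Type*} [MeasurableSpace α]
    (P Q R : Measure α) [IsProbabilityMeasure P] [IsProbabilityMeasure Q]
    [IsProbabilityMeasure R]
    (δ : ℝ) (hδ0 : 0 ≤ δ) (hδ1 : δ < 1)
    (hmix : P = ENNReal.ofReal (1 - δ) • Q + ENNReal.ofReal δ • R)
    (f : α → ℝ) (hf : MemLp f 2 P) :
    |∫ x, f x ∂P - ∫ x, f x ∂Q| ≤
      2 * Real.sqrt (δ * ∫ x, f x ^ 2 ∂P) / (1 - δ) := by
  rcases eq_or_lt_of_le hδ0 with hδz | hδpos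
  · -- δ = 0 : P = Q
    subst hδz
    have hPQ : P = Q := by simpa using hmix
    rw [hPQ]
    simp [Real.sqrt_nonneg]
  · have h1δ : (0:ℝ) < 1 - δ := by linarith
    -- Q and R are dominated by scalar multiples of P
    have hc1 : ENNReal.ofReal (1 - δ) ≠ 0 := (ENNReal.ofReal_pos.mpr h1δ).ne'
    have hc2 : ENNReal.ofReal δ ≠ 0 := (ENNReal.ofReal_pos.mpr hδpos).ne'
    have hQle : Q ≤ (ENNReal.ofReal (1 - δ))⁻¹ • P := by
      intro s
      have hle : ENNReal.ofReal (1 - δ) * Q s ≤ P s := by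
        rw [hmix]
        simp only [Measure.smul_apply, Measure.coe_add, Pi.add_apply, smul_eq_mul]
        exact le_add_of_nonneg_right zero_le
      calc Q s = (ENNReal.ofReal (1 - δ))⁻¹ * (ENNReal.ofReal (1 - δ) * Q s) := by
            rw [← mul_assoc, ENNReal.inv_mul_cancel hc1 ENNReal.ofReal_ne_top, one_mul]
        _ ≤ (ENNReal.ofReal (1 - δ))⁻¹ * P s := mul_le_mul_right hle _
        _ = ((ENNReal.ofReal (1 - δ))⁻¹ • P) s := rfl
    have hRle : R ≤ (ENNReal.ofReal δ)⁻¹ • P := by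
      intro s
      have hle : ENNReal.ofReal δ * R s ≤ P s := by
        rw [hmix]
        simp only [Measure.smul_apply, Measure.coe_add, Pi.add_apply, smul_eq_mul]
        exact le_add_of_nonneg_left zero_le
      calc R s = (ENNReal.ofReal δ)⁻¹ * (ENNReal.ofReal δ * R s) := by
            rw [← mul_assoc, ENNReal.inv_mul_cancel hc2 ENNReal.ofReal_ne_top, one_mul]
        _ ≤ (ENNReal.ofReal δ)⁻¹ * P s := mul_le_mul_right hle _
        _ = ((ENNReal.ofReal δ)⁻¹ • P) s := rfl
    have hfQ : MemLp f 2 Q :=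
      MemLp.of_measure_le_smul (by simp; linarith) hQle hf
    have hfR : MemLp f 2 R :=
      MemLp.of_measure_le_smul (by simp; linarith) hRle hf
    have hfQ1 : Integrable f Q := hfQ.integrable one_le_two
    have hfR1 : Integrable f R := hfR.integrable one_le_two
    have hfQ2 : Integrable (fun x => f x ^ 2) Q := by simpa [sq] using hfQ.integrable_sq
    have hfR2 : Integrable (fun x => f x ^ 2) R := by simpa [sq] using hfR.integrable_sq
    -- integral identities
    have hint : ∀ g : α → ℝ, Integrable g Q → Integrable g R →
        ∫ x, g x ∂P = (1 - δ) * ∫ x, g x ∂Q + δ * ∫ x, g x ∂ R := by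
      intro g hgQ hgR
      rw [hmix, integral_add_measure (hgQ.smul_measure ENNReal.ofReal_ne_top)
        (hgR.smul_measure ENNReal.ofReal_ne_top), integral_smul_measure, integral_smul_measure,
        ENNReal.toReal_ofReal (le_of_lt h1δ), ENNReal.toReal_ofReal hδ0]
      simp [smul_eq_mul]
    have hPf : ∫ x, f x ∂P = (1 - δ) * ∫ x, f x ∂Q + δ * ∫ x, f x ∂ R := hint f hfQ1 hfR1
    have hPf2 : ∫ x, f x ^ 2 ∂P = (1 - δ) * ∫ x, f x ^ 2 ∂Q + δ * ∫ x, f x ^ 2 ∂ R :=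
      hint _ hfQ2 hfR2
    -- notation
    set S := ∫ x, f x ^ 2 ∂P with hS
    have hQ2nn : 0 ≤ ∫ x, f x ^ 2 ∂Q := integral_nonneg fun x => sq_nonneg _
    have hR2nn : 0 ≤ ∫ x, f x ^ 2 ∂ R := integral_nonneg fun x => sq_nonneg _
    have hSnn : 0 ≤ S := by rw [hPf2]; positivity
    have hQb : (1 - δ) * ∫ x, f x ^ 2 ∂Q ≤ S := by
      rw [hPf2]; nlinarith
    have hRb : δ * ∫ x, f x ^ 2 ∂ R ≤ S := by
      rw [hPf2]; nlinarith
    set a := Real.sqrt δ with ha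
    set b := Real.sqrt (1 - δ) with hb
    set s := Real.sqrt S with hs
    set u := Real.sqrt (∫ x, f x ^ 2 ∂Q) with hu
    set v := Real.sqrt (∫ x, f x ^ 2 ∂ R) with hv
    have ha2 : a ^ 2 = δ := Real.sq_sqrt hδ0
    have hb2 : b ^ 2 = 1 - δ := Real.sq_sqrt (le_of_lt h1δ)
    have hs2 : s ^ 2 = S := Real.sq_sqrt hSnn
    have hu2 : u ^ 2 = ∫ x, f x ^ 2 ∂Q := Real.sq_sqrt hQ2nn
    have hv2 : v ^ 2 = ∫ x, f x ^ 2 ∂ R := Real.sq_sqrt hR2nn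
    have hann : 0 ≤ a := Real.sqrt_nonneg _
    have hbnn : 0 ≤ b := Real.sqrt_nonneg _
    have hsnn : 0 ≤ s := Real.sqrt_nonneg _
    have hunn : 0 ≤ u := Real.sqrt_nonneg _
    have hvnn : 0 ≤ v := Real.sqrt_nonneg _
    have ha1 : a ≤ 1 := by
      rw [ha]; exact Real.sqrt_le_one.mpr (le_of_lt hδ1)
    have hb1 : b ≤ 1 := by
      rw [hb]; exact Real.sqrt_le_one.mpr (by linarith)
    have hbu : b * u ≤ s := by
      have : (b * u) ^ 2 ≤ s ^ 2 := by rw [mul_pow, hb2, hu2, hs2]; exact hQb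
      exact (pow_le_pow_iff_left₀ (by positivity) hsnn two_ne_zero).mp this
    have hav : a * v ≤ s := by
      have : (a * v) ^ 2 ≤ s ^ 2 := by rw [mul_pow, ha2, hv2, hs2]; exact hRb
      exact (pow_le_pow_iff_left₀ (by positivity) hsnn two_ne_zero).mp this
    have hcsQ : |∫ x, f x ∂Q| ≤ u := cs_prob Q f hfQ
    have hcsR : |∫ x, f x ∂ R| ≤ v := cs_prob R f hfR
    have hdiff : ∫ x, f x ∂P - ∫ x, f x ∂Q = δ * (∫ x, f x ∂ R - ∫ x, f x ∂Q) := by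
      rw [hPf]; ring
    have hsqrt : Real.sqrt (δ * S) = a * s := Real.sqrt_mul hδ0 S
    rw [hdiff, le_div_iff₀ h1δ, hsqrt, abs_mul, abs_of_nonneg hδ0]
    have habs : |∫ x, f x ∂ R - ∫ x, f x ∂Q| ≤ v + u :=
      (abs_sub _ _).trans (add_le_add hcsR hcsQ)
    have key : δ * (v + u) * (1 - δ) ≤ 2 * (a * s) := by
      have h1 : δ * v * (1 - δ) ≤ a * s := by
        have hdv : δ * v ≤ a * s := by
          have h5 := mul_le_mul_of_nonneg_left hav hann
          have e : δ * v = a * (a * v) := by rw [← ha2]; ring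
          linarith
        nlinarith [mul_nonneg hδ0 hvnn]
      have h2 : δ * u * (1 - δ) ≤ a * s := by
        have hab1 : a * b ≤ 1 := mul_le_one₀ ha1 hbnn hb1
        have h3 : a * (b * u) ≤ a * s := mul_le_mul_of_nonneg_left hbu hann
        have e : δ * u * (1 - δ) = (a * b) * (a * (b * u)) := by rw [← hb2, ← ha2]; ring
        have h4 : (a * b) * (a * (b * u)) ≤ 1 * (a * s) :=
          mul_le_mul hab1 h3 (by positivity) zero_le_one
        linarith
      have e2 : δ * (v + u) * (1 - δ) = δ * v * (1 - δ) + δ * u * (1 - δ) := by ring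
      linarith
    calc δ * |∫ x, f x ∂ R - ∫ x, f x ∂Q| * (1 - δ)
        ≤ δ * (v + u) * (1 - δ) := by
          apply mul_le_mul_of_nonneg_right _ (le_of_lt h1δ)
          exact mul_le_mul_of_nonneg_left habs hδ0
      _ ≤ 2 * (a * s) := key
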